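/- For every 0 < κ < 1 the function θ_κ is bounded on [0,∞): there exists M > 0 such that |θ_κ(u)| ≤ M for all u ≥ 0. (Part of Lemma 1; the proof uses the integral representation K_{(κ−1)/2}(u)·u^{(1−κ)/2} = (√π/(2^{(κ−1)/2}Γ(κ/2)))·∫₁^∞ e^{−ut}(t²−1)^{κ/2−1} dt.) -/

import Mathlib

open Real MeasureTheory Filter

noncomputable def c1 (k : ℝ) : ℝ := (2:ℝ) ^ ((1 - k)/2) / (Real.sqrt π * Real.Gamma (k/2))

noncomputable def c2 (k : ℝ) : ℝ := 1 / (2 * Real.Gamma k * Real.cos (k * π / 2))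

/-- Modified Bessel function of the second kind:
`K ν z = (1/2) ∫₀^∞ s^(ν−1) exp(−(z/2)(s + 1/s)) ds`. -/
noncomputable def besselK (ν z : ℝ) : ℝ :=
  (1/2) * ∫ s in Set.Ioi (0:ℝ), s ^ (ν - 1) * Real.exp (-(z/2) * (s + 1/s))

/-- The function `θ_κ(u)` from Lemma 1. -/
noncomputable def theta (k u : ℝ) : ℝ :=
  Real.Gamma ((k+1)/2) *
    ((2:ℝ)^(k-1) * u^(1-k) / Real.Gamma ((3-k)/2)
      + ∑' m : ℕ, (u/2) ^ (2*((m:ℝ)+1) - k + 1) /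
          ((Nat.factorial (m+1)) * Real.Gamma (((m:ℝ)+1) + (3-k)/2))
      - ∑' m : ℕ, (u/2) ^ (2*((m:ℝ)+1)) /
          ((Nat.factorial (m+1)) * Real.Gamma (((m:ℝ)+1) + (k+1)/2)))

namespace Lemma1Aux
open Set

lemma summable_of_ratio_half {f : ℕ → ℝ} (hpos : ∀ n, 0 ≤ f n)
    (h : ∀ᶠ n in atTop, 2 * f (n + 1) ≤ f n) : Summable f := by
  apply summable_of_ratio_norm_eventually_le (r := 1/2) (by norm_num)
  filter_upwards [h] with n hn
  rw [Real.norm_eq_abs, Real.norm_eq_abs, abs_of_nonneg (hpos _), abs_of_nonneg (hpos _)]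
  linarith

lemma Gamma_nat_add_pos {a : ℝ} (ha : 0 < a) (m : ℕ) : 0 < Real.Gamma (m + a) :=
  Real.Gamma_pos_of_pos (by positivity)

lemma Gamma_nat_add_succ {a : ℝ} (ha : 0 < a) (m : ℕ) :
    Real.Gamma (((m : ℕ) + 1 : ℕ) + a) = ((m : ℝ) + a) * Real.Gamma (m + a) := by
  have h1 : (((m : ℕ) + 1 : ℕ) : ℝ) + a = ((m : ℝ) + a) + 1 := by push_cast; ring
  rw [h1, Real.Gamma_add_one (by positivity)]

/-- master summable majorant -/
lemma summable_master {a R : ℝ} (ha : 0 < a) (hR : 0 ≤ R) :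
    Summable (fun n : ℕ => ((n : ℝ) + 1) * R ^ n / (n.factorial * Real.Gamma (n + a))) := by
  apply summable_of_ratio_half
  · intro n
    have := Gamma_nat_add_pos ha n
    positivity
  · filter_upwards [eventually_ge_atTop (max 1 ⌈3 * R⌉₊)] with n hn
    have hn1 : (1 : ℝ) ≤ (n : ℝ) := by
      exact_mod_cast Nat.one_le_cast.mpr (le_trans (le_max_left _ _) hn)
    have hn3 : 3 * R ≤ (n : ℝ) := le_trans (Nat.le_ceil _)
      (by exact_mod_cast le_trans (le_max_right _ _) hn)
    have hG := Gamma_nat_add_pos ha n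
    have hfac : (0:ℝ) < (n.factorial : ℝ) := by exact_mod_cast n.factorial_pos
    have hiden : (((n + 1 : ℕ) : ℝ) + 1) * R ^ (n+1) / ((n+1).factorial * Real.Gamma ((n+1 : ℕ) + a))
        = (((n : ℝ) + 1) * R ^ n / (n.factorial * Real.Gamma (n + a)))
          * (((n : ℝ) + 2) * R / (((n : ℝ) + 1) * (((n : ℝ) + 1) * ((n : ℝ) + a)))) := by
      rw [Gamma_nat_add_succ ha, Nat.factorial_succ]
      push_cast
      field_simp
      ring
    rw [hiden]
    have hkey : ((n : ℝ) + 2) * R / (((n : ℝ) + 1) * (((n : ℝ) + 1) * ((n : ℝ) + a))) ≤ 1/2 := by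
      rw [div_le_iff₀ (by positivity)]
      have h3 : ((n:ℝ) + 2) * (3 * R) ≤ ((n:ℝ) + 2) * (n:ℝ) :=
        mul_le_mul_of_nonneg_left hn3 (by linarith)
      nlinarith [mul_nonneg (mul_nonneg (by linarith : (0:ℝ) ≤ (n:ℝ)+1) (by linarith : (0:ℝ) ≤ (n:ℝ)+1)) ha.le, sq_nonneg ((n:ℝ)+1)]
    have hpos : (0:ℝ) ≤ ((n : ℝ) + 1) * R ^ n / (n.factorial * Real.Gamma (n + a)) := by positivity
    calc 2 * ((((n : ℝ) + 1) * R ^ n / (n.factorial * Real.Gamma (n + a)))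
          * (((n : ℝ) + 2) * R / (((n : ℝ) + 1) * (((n : ℝ) + 1) * ((n : ℝ) + a)))))
        ≤ 2 * ((((n : ℝ) + 1) * R ^ n / (n.factorial * Real.Gamma (n + a))) * (1/2)) := by
          apply mul_le_mul_of_nonneg_left (mul_le_mul_of_nonneg_left hkey hpos) (by norm_num)
      _ = ((n : ℝ) + 1) * R ^ n / (n.factorial * Real.Gamma (n + a)) := by ring

noncomputable def P (a z : ℝ) : ℝ := ∑' m : ℕ, z ^ m / (m.factorial * Real.Gamma (m + a))

lemma norm_P_term_le {a : ℝ} (ha : 0 < a) {z R : ℝ} (hzR : |z| ≤ R) (m : ℕ) :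
    ‖z ^ m / (m.factorial * Real.Gamma (m + a))‖
      ≤ ((m : ℝ) + 1) * R ^ m / (m.factorial * Real.Gamma (m + a)) := by
  have hG := Gamma_nat_add_pos ha m
  have hfac : (0:ℝ) < (m.factorial : ℝ) := by exact_mod_cast m.factorial_pos
  have hd : (0:ℝ) < (m.factorial : ℝ) * Real.Gamma (m + a) := by positivity
  rw [Real.norm_eq_abs, abs_div, abs_pow, abs_of_pos hd]
  have hRnn : 0 ≤ R := (abs_nonneg z).trans hzR
  have h1 : |z| ^ m ≤ R ^ m := pow_le_pow_left₀ (abs_nonneg z) hzR m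
  have h2 : R ^ m ≤ ((m:ℝ) + 1) * R ^ m := by
    nlinarith [pow_nonneg hRnn m]
  gcongr
  exact h1.trans h2

lemma summable_P {a : ℝ} (ha : 0 < a) (z : ℝ) :
    Summable (fun m : ℕ => z ^ m / (m.factorial * Real.Gamma (m + a))) :=
  Summable.of_norm_bounded (summable_master ha (abs_nonneg z)) (norm_P_term_le ha le_rfl)

lemma P_zero {a : ℝ} (ha : 0 < a) : P a 0 = 1 / Real.Gamma a := by
  rw [P, tsum_eq_single 0]
  · simp
  · intro m hm
    rw [zero_pow hm]
    simp

lemma fact_Gamma_pos {a : ℝ} (ha : 0 < a) (m : ℕ) :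
    (0:ℝ) < (m.factorial : ℝ) * Real.Gamma (m + a) := by
  have h1 := Gamma_nat_add_pos ha m
  have h2 : (0:ℝ) < (m.factorial : ℝ) := by exact_mod_cast m.factorial_pos
  positivity

lemma summable_mulP {a : ℝ} (ha : 0 < a) (z : ℝ) :
    Summable (fun m : ℕ => (m : ℝ) * z ^ m / (m.factorial * Real.Gamma (m + a))) := by
  apply Summable.of_norm_bounded (summable_master ha (abs_nonneg z))
  intro m
  rw [Real.norm_eq_abs, abs_div, abs_of_pos (fact_Gamma_pos ha m), abs_mul, abs_pow, Nat.abs_cast]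
  gcongr
  linarith

lemma deriv_term_bound {a : ℝ} (ha : 0 < a) {R : ℝ} (hR1 : 1 ≤ R) {y : ℝ} (hy : |y| ≤ R) (n : ℕ) :
    ‖(n : ℝ) * y ^ (n - 1) / (n.factorial * Real.Gamma (n + a))‖
      ≤ ((n : ℝ) + 1) * R ^ n / (n.factorial * Real.Gamma (n + a)) := by
  rw [Real.norm_eq_abs, abs_div, abs_of_pos (fact_Gamma_pos ha n), abs_mul, abs_pow, Nat.abs_cast]
  gcongr
  · linarith
  · calc |y| ^ (n - 1) ≤ R ^ (n - 1) := pow_le_pow_left₀ (abs_nonneg y) hy _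
      _ ≤ R ^ n := pow_le_pow_right₀ hR1 (Nat.sub_le n 1)

lemma shift_term_eq {a : ℝ} (ha : 0 < a) (z : ℝ) (m : ℕ) :
    ((m + 1 : ℕ) : ℝ) * z ^ ((m + 1) - 1) / ((m + 1).factorial * Real.Gamma (((m + 1 : ℕ)) + a))
      = z ^ m / (m.factorial * Real.Gamma ((m : ℝ) + (a + 1))) := by
  have h1 : Real.Gamma (((m + 1 : ℕ) : ℝ) + a) = ((m : ℝ) + a) * Real.Gamma (m + a) :=
    Gamma_nat_add_succ ha m
  have h2 : Real.Gamma ((m : ℝ) + (a + 1)) = ((m : ℝ) + a) * Real.Gamma (m + a) := by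
    rw [show (m : ℝ) + (a + 1) = ((m : ℝ) + a) + 1 by ring,
      Real.Gamma_add_one (by positivity)]
  have h3 : (((m + 1).factorial : ℕ) : ℝ) = ((m : ℝ) + 1) * m.factorial := by
    rw [Nat.factorial_succ]; push_cast; ring
  have h4 : (m + 1) - 1 = m := rfl
  have hG := Gamma_nat_add_pos ha m
  have hf : (0:ℝ) < (m.factorial : ℝ) := by exact_mod_cast m.factorial_pos
  rw [h4, h1, h2, h3]
  field_simp
  push_cast
  ring

lemma shift_term_eq' {a : ℝ} (ha : 0 < a) (z : ℝ) (m : ℕ) :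
    ((m + 1 : ℕ) : ℝ) * z ^ (m + 1) / ((m + 1).factorial * Real.Gamma (((m + 1 : ℕ)) + a))
      = z * (z ^ m / (m.factorial * Real.Gamma ((m : ℝ) + (a + 1)))) := by
  have h1 : Real.Gamma (((m + 1 : ℕ) : ℝ) + a) = ((m : ℝ) + a) * Real.Gamma (m + a) :=
    Gamma_nat_add_succ ha m
  have h2 : Real.Gamma ((m : ℝ) + (a + 1)) = ((m : ℝ) + a) * Real.Gamma (m + a) := by
    rw [show (m : ℝ) + (a + 1) = ((m : ℝ) + a) + 1 by ring,
      Real.Gamma_add_one (by positivity)]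
  have h3 : (((m + 1).factorial : ℕ) : ℝ) = ((m : ℝ) + 1) * m.factorial := by
    rw [Nat.factorial_succ]; push_cast; ring
  have hG := Gamma_nat_add_pos ha m
  have hf : (0:ℝ) < (m.factorial : ℝ) := by exact_mod_cast m.factorial_pos
  rw [h1, h2, h3]
  field_simp
  push_cast
  ring

lemma hasDerivAt_P {a : ℝ} (ha : 0 < a) (z : ℝ) : HasDerivAt (P a) (P (a + 1) z) z := by
  set R : ℝ := |z| + 1 with hRdef
  have habs := abs_nonneg z
  have hR0 : (0:ℝ) ≤ R := by positivity
  have hR1 : 1 ≤ R := by rw [hRdef]; linarith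
  have hzR : z ∈ Metric.ball (0:ℝ) R := by
    rw [Metric.mem_ball, Real.dist_eq, sub_zero, hRdef]; linarith
  have hu : Summable (fun n : ℕ => ((n : ℝ) + 1) * R ^ n / (n.factorial * Real.Gamma (n + a))) :=
    summable_master ha hR0
  have hderiv : HasDerivAt (fun y => ∑' n : ℕ, y ^ n / (n.factorial * Real.Gamma (n + a)))
      (∑' n : ℕ, (n : ℝ) * z ^ (n - 1) / (n.factorial * Real.Gamma (n + a))) z := by
    apply hasDerivAt_tsum_of_isPreconnected hu Metric.isOpen_ball
      (convex_ball (0:ℝ) R).isPreconnected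
      (g := fun (n : ℕ) (y : ℝ) => y ^ n / (n.factorial * Real.Gamma (n + a)))
      (g' := fun (n : ℕ) (y : ℝ) => (n : ℝ) * y ^ (n - 1) / (n.factorial * Real.Gamma (n + a)))
      (fun n y _ => (hasDerivAt_pow n y).div_const _) ?_ (Metric.mem_ball_self (by linarith))
      (summable_P ha 0) hzR
    intro n y hy
    have : |y| ≤ R := le_of_lt (by simpa [Real.dist_eq] using hy)
    exact deriv_term_bound ha hR1 this n
  have hs : Summable (fun n : ℕ => (n : ℝ) * z ^ (n - 1) / (n.factorial * Real.Gamma (n + a))) :=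
    Summable.of_norm_bounded hu (fun n => deriv_term_bound ha hR1 (by rw [hRdef]; linarith) n)
  have heq : (∑' n : ℕ, (n : ℝ) * z ^ (n - 1) / (n.factorial * Real.Gamma (n + a)))
      = P (a + 1) z := by
    rw [hs.tsum_eq_zero_add]
    simp only [Nat.cast_zero, zero_mul, zero_div, zero_add]
    exact tsum_congr (fun m => shift_term_eq ha z m)
  rw [heq] at hderiv
  exact hderiv

lemma P_rec {a : ℝ} (ha : 0 < a) (z : ℝ) : P a z = a * P (a + 1) z + z * P (a + 2) z := by
  have hsum1 : Summable (fun m : ℕ => a * (z ^ m / (m.factorial * Real.Gamma ((m : ℝ) + (a + 1))))) :=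
    (summable_P (by linarith : (0:ℝ) < a + 1) z).mul_left a
  have hsum2 : Summable (fun m : ℕ => (m : ℝ) * z ^ m / (m.factorial * Real.Gamma ((m : ℝ) + (a + 1)))) :=
    summable_mulP (by linarith : (0:ℝ) < a + 1) z
  have hterm : ∀ m : ℕ, z ^ m / (m.factorial * Real.Gamma ((m : ℝ) + a))
      = a * (z ^ m / (m.factorial * Real.Gamma ((m : ℝ) + (a + 1))))
        + (m : ℝ) * z ^ m / (m.factorial * Real.Gamma ((m : ℝ) + (a + 1))) := by
    intro m
    have h2 : Real.Gamma ((m : ℝ) + (a + 1)) = ((m : ℝ) + a) * Real.Gamma (m + a) := by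
      rw [show (m : ℝ) + (a + 1) = ((m : ℝ) + a) + 1 by ring,
        Real.Gamma_add_one (by positivity)]
    have hG := Gamma_nat_add_pos ha m
    have hf : (0:ℝ) < (m.factorial : ℝ) := by exact_mod_cast m.factorial_pos
    rw [h2]
    field_simp
    ring
  have hshift : (∑' m : ℕ, (m : ℝ) * z ^ m / (m.factorial * Real.Gamma ((m : ℝ) + (a + 1))))
      = z * P (a + 2) z := by
    rw [hsum2.tsum_eq_zero_add]
    simp only [Nat.cast_zero, zero_mul, zero_div, zero_add]
    rw [P, ← tsum_mul_left]
    apply tsum_congr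
    intro m
    rw [shift_term_eq' (by linarith : (0:ℝ) < a + 1) z m]
    rw [show (a + 1) + 1 = a + 2 by ring]
  calc P a z = ∑' m : ℕ, (a * (z ^ m / (m.factorial * Real.Gamma ((m : ℝ) + (a + 1))))
        + (m : ℝ) * z ^ m / (m.factorial * Real.Gamma ((m : ℝ) + (a + 1)))) := by
        rw [P]; exact tsum_congr hterm
    _ = (∑' m : ℕ, a * (z ^ m / (m.factorial * Real.Gamma ((m : ℝ) + (a + 1)))))
        + ∑' m : ℕ, (m : ℝ) * z ^ m / (m.factorial * Real.Gamma ((m : ℝ) + (a + 1))) :=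
        hsum1.tsum_add hsum2
    _ = a * P (a + 1) z + z * P (a + 2) z := by rw [tsum_mul_left, hshift]; rfl

noncomputable def Gi (a z : ℝ) : ℝ := ∫ t in Ioi (0:ℝ), t ^ (a - 1) * Real.exp (-t - z / t)

lemma pow_div_le_exp (n : ℕ) {x : ℝ} (hx : 0 ≤ x) : x ^ n / n.factorial ≤ Real.exp x := by
  calc x ^ n / n.factorial ≤ ∑ i ∈ Finset.range (n + 1), x ^ i / i.factorial := by
        apply Finset.single_le_sum (f := fun i => x ^ i / (i.factorial : ℝ))
          (fun i _ => by positivity) (Finset.self_mem_range_succ n)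
    _ ≤ Real.exp x := Real.sum_le_exp_of_nonneg hx _

lemma aesm_aux (b z : ℝ) :
    AEStronglyMeasurable (fun t : ℝ => t ^ b * Real.exp (-t - z / t))
      (volume.restrict (Ioi (0:ℝ))) := by
  apply ContinuousOn.aestronglyMeasurable ?_ measurableSet_Ioi
  apply ContinuousOn.mul
  · exact fun x hx => (Real.continuousAt_rpow_const x b (Or.inl (ne_of_gt hx))).continuousWithinAt
  · apply Real.continuous_exp.comp_continuousOn
    exact (continuousOn_id.neg).sub (continuousOn_const.div continuousOn_id fun x hx => ne_of_gt hx)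

/-- integrability for `b > -1`, `c ≥ 0` -/
lemma integrable_aux1 {b : ℝ} (hb : -1 < b) {c : ℝ} (hc : 0 ≤ c) :
    IntegrableOn (fun t : ℝ => t ^ b * Real.exp (-t - c / t)) (Ioi (0:ℝ)) := by
  apply Integrable.mono' (Real.GammaIntegral_convergent (show 0 < b + 1 by linarith))
    (aesm_aux b c)
  rw [ae_restrict_iff' measurableSet_Ioi]
  filter_upwards with t ht
  have ht' : (0:ℝ) < t := ht
  rw [Real.norm_eq_abs, abs_mul, abs_of_nonneg (Real.rpow_nonneg ht'.le b),
    abs_of_pos (Real.exp_pos _)]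
  rw [show b + 1 - 1 = b by ring, mul_comm (Real.exp (-t))]
  have : 0 ≤ c / t := div_nonneg hc ht'.le
  exact mul_le_mul_of_nonneg_left (Real.exp_le_exp.2 (by linarith))
    (Real.rpow_nonneg ht'.le b)

/-- integrability for arbitrary `b`, `c > 0` -/
lemma integrable_aux2 (b : ℝ) {c : ℝ} (hc : 0 < c) :
    IntegrableOn (fun t : ℝ => t ^ b * Real.exp (-t - c / t)) (Ioi (0:ℝ)) := by
  rw [← Ioc_union_Ioi_eq_Ioi (zero_le_one (α := ℝ)), integrableOn_union]
  constructor
  · -- on Ioc 0 1 : bounded by constant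
    set n : ℕ := ⌈-b⌉₊ with hn
    have hbn : 0 ≤ b + n := by
      have := Nat.le_ceil (-b)
      rw [← hn] at this
      linarith
    apply Integrable.mono' (g := fun _ : ℝ => (n.factorial : ℝ) * c ^ (-(n:ℝ)))
      (integrableOn_const measure_Ioc_lt_top.ne)
    · apply ContinuousOn.aestronglyMeasurable ?_ measurableSet_Ioc
      apply ContinuousOn.mul
      · exact fun x hx => (Real.continuousAt_rpow_const x b (Or.inl (ne_of_gt hx.1))).continuousWithinAt
      · apply Real.continuous_exp.comp_continuousOn
        exact (continuousOn_id.neg).sub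
          (continuousOn_const.div continuousOn_id fun x hx => ne_of_gt hx.1)
    · rw [ae_restrict_iff' measurableSet_Ioc]
      filter_upwards with t ht
      have ht0 : (0:ℝ) < t := ht.1
      have ht1 : t ≤ 1 := ht.2
      rw [Real.norm_eq_abs, abs_mul, abs_of_nonneg (Real.rpow_nonneg ht0.le b),
        abs_of_pos (Real.exp_pos _)]
      have hexp : Real.exp (-t - c/t) ≤ Real.exp (-(c/t)) := by
        apply Real.exp_le_exp.2; linarith
      have hkey : Real.exp (-(c/t)) ≤ (n.factorial : ℝ) * t ^ (n:ℝ) * c ^ (-(n:ℝ)) := by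
        rw [Real.exp_neg]
        have h1 : (c/t) ^ n / (n.factorial : ℝ) ≤ Real.exp (c/t) :=
          pow_div_le_exp n (by positivity)
        have h2 : (0:ℝ) < (c/t) ^ n / (n.factorial : ℝ) := by positivity
        have := inv_anti₀ h2 h1
        calc (Real.exp (c/t))⁻¹ ≤ ((c/t) ^ n / (n.factorial : ℝ))⁻¹ := this
          _ = (n.factorial : ℝ) * t ^ (n:ℝ) * c ^ (-(n:ℝ)) := by
            rw [div_pow, Real.rpow_neg hc.le, Real.rpow_natCast, Real.rpow_natCast]
            field_simp
      calc t ^ b * Real.exp (-t - c/t) ≤ t ^ b * ((n.factorial : ℝ) * t ^ (n:ℝ) * c ^ (-(n:ℝ))) := by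
            apply mul_le_mul_of_nonneg_left (hexp.trans hkey) (Real.rpow_nonneg ht0.le b)
        _ = t ^ (b + (n:ℝ)) * ((n.factorial : ℝ) * c ^ (-(n:ℝ))) := by
            rw [Real.rpow_add ht0]; ring
        _ ≤ 1 * ((n.factorial : ℝ) * c ^ (-(n:ℝ))) := by
            apply mul_le_mul_of_nonneg_right ?_ (by positivity)
            exact Real.rpow_le_one ht0.le ht1 hbn
        _ = (n.factorial : ℝ) * c ^ (-(n:ℝ)) := one_mul _
  · -- on Ioi 1 : bounded by C * exp(-t/2)
    set n : ℕ := ⌈b⌉₊ with hn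
    have hbn : b ≤ (n:ℝ) := Nat.le_ceil b
    apply Integrable.mono' (g := fun t : ℝ => ((2:ℝ) ^ n * n.factorial) * Real.exp (-(1/2) * t))
      ((exp_neg_integrableOn_Ioi 1 (by norm_num : (0:ℝ) < 1/2)).const_mul _)
    · apply ContinuousOn.aestronglyMeasurable ?_ measurableSet_Ioi
      apply ContinuousOn.mul
      · intro x hx
        have : (0:ℝ) < x := lt_trans zero_lt_one hx
        exact (Real.continuousAt_rpow_const x b (Or.inl (ne_of_gt this))).continuousWithinAt
      · apply Real.continuous_exp.comp_continuousOn
        exact (continuousOn_id.neg).sub (continuousOn_const.div continuousOn_id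
          fun x hx => ne_of_gt (lt_trans zero_lt_one hx))
    · rw [ae_restrict_iff' measurableSet_Ioi]
      filter_upwards with t ht
      have ht1 : (1:ℝ) < t := ht
      have ht0 : (0:ℝ) < t := lt_trans zero_lt_one ht1
      rw [Real.norm_eq_abs, abs_mul, abs_of_nonneg (Real.rpow_nonneg ht0.le b),
        abs_of_pos (Real.exp_pos _)]
      have h1 : t ^ b ≤ t ^ (n:ℝ) := Real.rpow_le_rpow_of_exponent_le ht1.le hbn
      have h2 : t ^ (n:ℝ) = 2 ^ n * (t/2) ^ n := by
        rw [Real.rpow_natCast, div_pow]; field_simp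
      have h3 : (t/2) ^ n ≤ (n.factorial : ℝ) * Real.exp (t/2) := by
        have := pow_div_le_exp n (show (0:ℝ) ≤ t/2 by linarith)
        rw [div_le_iff₀ (by positivity)] at this
        linarith [this]
      have h4 : Real.exp (-t - c/t) ≤ Real.exp (-t) := by
        apply Real.exp_le_exp.2
        have : 0 ≤ c / t := div_nonneg hc.le ht0.le
        linarith
      calc t ^ b * Real.exp (-t - c/t) ≤ t ^ (n:ℝ) * Real.exp (-t) := by
            apply mul_le_mul h1 h4 (Real.exp_pos _).le (Real.rpow_nonneg ht0.le _)
        _ = 2 ^ n * (t/2) ^ n * Real.exp (-t) := by rw [h2]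
        _ ≤ 2 ^ n * ((n.factorial : ℝ) * Real.exp (t/2)) * Real.exp (-t) := by
            apply mul_le_mul_of_nonneg_right ?_ (Real.exp_pos _).le
            apply mul_le_mul_of_nonneg_left h3 (by positivity)
        _ = ((2:ℝ) ^ n * n.factorial) * Real.exp (-(1/2) * t) := by
            rw [mul_assoc, mul_assoc, ← Real.exp_add]
            ring_nf

lemma Gi_zero {a : ℝ} (ha : 0 < a) : Gi a 0 = Real.Gamma a := by
  rw [Gi, Real.Gamma_eq_integral ha]
  apply setIntegral_congr_fun measurableSet_Ioi
  intro t _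
  show t ^ (a - 1) * Real.exp (-t - 0 / t) = Real.exp (-t) * t ^ (a - 1)
  rw [zero_div, sub_zero, mul_comm]

lemma Gi_nonneg {a z : ℝ} : 0 ≤ Gi a z := by
  apply setIntegral_nonneg measurableSet_Ioi
  intro t ht
  have : (0:ℝ) < t := ht
  positivity

lemma Gi_le_Gamma {a z : ℝ} (ha : 0 < a) (hz : 0 ≤ z) : Gi a z ≤ Real.Gamma a := by
  rw [Gi, Real.Gamma_eq_integral ha]
  apply setIntegral_mono_on (integrable_aux1 (by linarith) hz)
    (Real.GammaIntegral_convergent ha) measurableSet_Ioi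
  intro t ht
  have ht' : (0:ℝ) < t := ht
  rw [mul_comm (Real.exp (-t))]
  have : 0 ≤ z / t := div_nonneg hz ht'.le
  exact mul_le_mul_of_nonneg_left (Real.exp_le_exp.2 (by linarith)) (Real.rpow_nonneg ht'.le _)

lemma Gi_tendsto_zero {a : ℝ} (ha : 0 < a) :
    Tendsto (Gi a) (nhdsWithin 0 (Ici (0:ℝ))) (nhds (Real.Gamma a)) := by
  have h0 : Real.Gamma a = Gi a 0 := (Gi_zero ha).symm
  rw [h0, Gi]
  have : Gi a 0 = ∫ t in Ioi (0:ℝ), t ^ (a-1) * Real.exp (-t - 0/t) := rfl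
  rw [← this, Gi_zero ha, show Real.Gamma a = ∫ t in Ioi (0:ℝ), Real.exp (-t) * t ^ (a-1) from
    Real.Gamma_eq_integral ha]
  apply tendsto_integral_filter_of_dominated_convergence
    (fun t => Real.exp (-t) * t ^ (a-1))
  · filter_upwards with z
    exact aesm_aux (a-1) z
  · filter_upwards [eventually_mem_nhdsWithin] with z (hz : z ∈ Ici (0:ℝ))
    rw [ae_restrict_iff' measurableSet_Ioi]
    filter_upwards with t ht
    have ht' : (0:ℝ) < t := ht
    rw [Real.norm_eq_abs, abs_mul, abs_of_nonneg (Real.rpow_nonneg ht'.le _),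
      abs_of_pos (Real.exp_pos _), mul_comm (Real.exp (-t))]
    have : 0 ≤ z / t := div_nonneg hz ht'.le
    exact mul_le_mul_of_nonneg_left (Real.exp_le_exp.2 (by linarith)) (Real.rpow_nonneg ht'.le _)
  · exact Real.GammaIntegral_convergent ha
  · rw [ae_restrict_iff' measurableSet_Ioi]
    filter_upwards with t
    intro ht
    have ht' : (0:ℝ) < t := ht
    have hc : Continuous (fun z : ℝ => t ^ (a-1) * Real.exp (-t - z/t)) := by
      apply continuous_const.mul
      exact Real.continuous_exp.comp (continuous_const.sub (continuous_id.div_const t))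
    have h2 : Real.exp (-t) * t ^ (a-1) = t ^ (a-1) * Real.exp (-t - 0/t) := by
      rw [zero_div, sub_zero, mul_comm]
    rw [h2]
    exact (hc.tendsto 0).mono_left nhdsWithin_le_nhds

/-- substitution `t ↦ z/t` -/
lemma Gi_inversion {b z : ℝ} (hz : 0 < z) :
    ∫ t in Ioi (0:ℝ), t ^ (b - 1) * Real.exp (-t - z / t)
      = z ^ b * ∫ t in Ioi (0:ℝ), t ^ (-b - 1) * Real.exp (-t - z / t) := by
  have step1 : ∫ t in Ioi (0:ℝ), t ^ (b - 1) * Real.exp (-t - z / t)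
      = ∫ x in Ioi (0:ℝ), x ^ (-b - 1) * Real.exp (-x⁻¹ - z * x) := by
    rw [← integral_comp_rpow_Ioi (fun y => y ^ (b-1) * Real.exp (-y - z/y))
      (show (-1:ℝ) ≠ 0 by norm_num)]
    apply setIntegral_congr_fun measurableSet_Ioi
    intro x hx
    have hx' : (0:ℝ) < x := hx
    simp only [smul_eq_mul]
    rw [Real.rpow_neg_one x, Real.inv_rpow hx'.le, ← Real.rpow_neg hx'.le, show z / x⁻¹ = z * x from by field_simp,
      abs_neg, abs_one, one_mul, show (-1:ℝ) - 1 = -2 by norm_num,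
      ← mul_assoc, ← Real.rpow_add hx', show (-2:ℝ) + -(b-1) = -b-1 by ring]
  have step2 : ∫ x in Ioi (0:ℝ), x ^ (-b - 1) * Real.exp (-x⁻¹ - z * x)
      = z ^ b * ∫ t in Ioi (0:ℝ), t ^ (-b - 1) * Real.exp (-t - z / t) := by
    have key := integral_comp_mul_left_Ioi
      (fun s => s ^ (-b - 1) * Real.exp (-s - z / s)) 0 hz
    rw [mul_zero] at key
    have congr1 : ∫ x in Ioi (0:ℝ), (fun s => s ^ (-b-1) * Real.exp (-s - z/s)) (z * x)
        = ∫ x in Ioi (0:ℝ), z ^ (-b-1) * (x ^ (-b-1) * Real.exp (-x⁻¹ - z * x)) := by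
      apply setIntegral_congr_fun measurableSet_Ioi
      intro x hx
      have hx' : (0:ℝ) < x := hx
      simp only
      rw [Real.mul_rpow hz.le hx'.le]
      have : z / (z * x) = x⁻¹ := by field_simp
      rw [this]
      ring_nf
    rw [congr1, integral_const_mul, smul_eq_mul] at key
    calc ∫ x in Ioi (0:ℝ), x ^ (-b-1) * Real.exp (-x⁻¹ - z * x)
        = (z ^ (-b-1))⁻¹ * (z ^ (-b-1) * ∫ x in Ioi (0:ℝ), x ^ (-b-1) * Real.exp (-x⁻¹ - z * x)) := by
          have hzb : z ^ (-b-1) ≠ 0 := ne_of_gt (Real.rpow_pos_of_pos hz _)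
          rw [← mul_assoc, inv_mul_cancel₀ hzb, one_mul]
      _ = (z ^ (-b-1))⁻¹ * (z⁻¹ * ∫ s in Ioi (0:ℝ), s ^ (-b-1) * Real.exp (-s - z/s)) := by
          rw [key]
      _ = z ^ b * ∫ t in Ioi (0:ℝ), t ^ (-b - 1) * Real.exp (-t - z / t) := by
          rw [← Real.rpow_neg hz.le (-b-1), show -(-b-1) = b + 1 by ring,
            ← Real.rpow_neg_one z, ← mul_assoc, ← Real.rpow_add hz,
            show b + 1 + (-1:ℝ) = b by ring]
  rw [step1, step2]

lemma Gi_hasDerivAt (a : ℝ) {z : ℝ} (hz : 0 < z) :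
    HasDerivAt (Gi a) (-(z ^ (a - 1) * Gi (1 - a) z)) z := by
  have hder := hasDerivAt_integral_of_dominated_loc_of_deriv_le
    (μ := volume.restrict (Ioi (0:ℝ))) (x₀ := z)
    (F := fun x t => t ^ (a - 1) * Real.exp (-t - x / t))
    (F' := fun x t => -(t ^ (a - 2) * Real.exp (-t - x / t)))
    (bound := fun t => t ^ (a - 2) * Real.exp (-t - (z/2) / t))
    (Metric.ball_mem_nhds z (half_pos hz))
    (Filter.Eventually.of_forall (fun x => aesm_aux (a-1) x))
    (integrable_aux2 (a-1) hz)
    ((aesm_aux (a-2) z).neg)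
    ?_ (integrable_aux2 (a-2) (half_pos hz)) ?_
  · obtain ⟨-, hder⟩ := hder
    have heq : ∫ t in Ioi (0:ℝ), -(t ^ (a - 2) * Real.exp (-t - z / t))
        = -(z ^ (a - 1) * Gi (1 - a) z) := by
      rw [integral_neg]
      congr 1
      have h1 : ∫ t in Ioi (0:ℝ), t ^ (a - 2) * Real.exp (-t - z / t)
          = ∫ t in Ioi (0:ℝ), t ^ ((a-1) - 1) * Real.exp (-t - z / t) := by
        rw [show a - 1 - 1 = a - 2 by ring]
      rw [h1, Gi_inversion hz, Gi]
      congr 1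
      apply setIntegral_congr_fun measurableSet_Ioi
      intro t _
      have : -(a-1) - 1 = (1-a) - 1 := by ring
      rw [this]
    rw [heq] at hder
    exact hder
  · rw [ae_restrict_iff' measurableSet_Ioi]
    filter_upwards with t
    intro ht x hx
    have ht' : (0:ℝ) < t := ht
    have hxz : z/2 ≤ x := by
      have := abs_lt.1 (by simpa [Real.dist_eq] using hx)
      linarith [this.1]
    rw [norm_neg, Real.norm_eq_abs, abs_mul, abs_of_nonneg (Real.rpow_nonneg ht'.le _),
      abs_of_pos (Real.exp_pos _)]
    apply mul_le_mul_of_nonneg_left ?_ (Real.rpow_nonneg ht'.le _)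
    apply Real.exp_le_exp.2
    have h5 : (z/2)/t ≤ x/t := by gcongr
    linarith
  · rw [ae_restrict_iff' measurableSet_Ioi]
    filter_upwards with t
    intro ht x _
    have ht' : (0:ℝ) < t := ht
    have hinner : HasDerivAt (fun x : ℝ => -t - x / t) (-(1/t)) x := by
      simpa using ((hasDerivAt_id x).div_const t).const_sub (-t)
    have h2 : HasDerivAt (fun x : ℝ => t ^ (a-1) * Real.exp (-t - x / t))
        (t ^ (a-1) * (Real.exp (-t - x / t) * -(1/t))) x :=
      (hinner.exp).const_mul _
    have h4 : t ^ (a - 2) = t ^ (a-1) * (1/t) := by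
      rw [show a - 2 = (a-1) - 1 by ring, Real.rpow_sub_one (ne_of_gt ht'), one_div,
        div_eq_mul_inv]
    have h3 : t ^ (a-1) * (Real.exp (-t - x / t) * -(1/t))
        = -(t ^ (a - 2) * Real.exp (-t - x / t)) := by
      rw [h4]; ring
    rw [h3] at h2
    exact h2

noncomputable def U (a z : ℝ) : ℝ :=
  Real.Gamma a * Real.Gamma (1 - a) * (P (1 - a) z - z ^ a * P (a + 1) z)

lemma continuous_U {a : ℝ} (ha0 : 0 < a) (ha1 : a < 1) : Continuous (U a) := by
  have hP1 : Continuous (P (1 - a)) := continuous_iff_continuousAt.2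
    (fun z => (hasDerivAt_P (by linarith) z).continuousAt)
  have hP2 : Continuous (P (a + 1)) := continuous_iff_continuousAt.2
    (fun z => (hasDerivAt_P (by linarith) z).continuousAt)
  have hrpow : Continuous (fun z : ℝ => z ^ a) := continuous_iff_continuousAt.2
    (fun x => Real.continuousAt_rpow_const x a (Or.inr ha0.le))
  exact continuous_const.mul (hP1.sub (hrpow.mul hP2))

lemma U_zero {a : ℝ} (ha0 : 0 < a) (ha1 : a < 1) : U a 0 = Real.Gamma a := by
  have hG : Real.Gamma (1 - a) ≠ 0 := ne_of_gt (Real.Gamma_pos_of_pos (by linarith))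
  rw [U, P_zero (by linarith : (0:ℝ) < 1 - a), Real.zero_rpow (ne_of_gt ha0)]
  field_simp
  ring

lemma hasDerivAt_U {a : ℝ} (ha0 : 0 < a) (ha1 : a < 1) {z : ℝ} (hz : 0 < z) :
    HasDerivAt (U a) (-(z ^ (a - 1) * U (1 - a) z)) z := by
  have h1 : HasDerivAt (P (1 - a)) (P (1 - a + 1) z) z := hasDerivAt_P (by linarith) z
  have h2 : HasDerivAt (P (a + 1)) (P (a + 1 + 1) z) z := hasDerivAt_P (by linarith) z
  have hzp : HasDerivAt (fun z : ℝ => z ^ a) (a * z ^ (a - 1)) z :=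
    Real.hasDerivAt_rpow_const (Or.inl hz.ne')
  have h3 := ((h1.sub (hzp.mul h2)).const_mul (Real.Gamma a * Real.Gamma (1 - a)))
  have hfun : (fun z => Real.Gamma a * Real.Gamma (1 - a) * (P (1 - a) z - z ^ a * P (a + 1) z))
      = U a := rfl
  change HasDerivAt (U a) _ z at h3
  have harith : Real.Gamma a * Real.Gamma (1 - a)
      * (P (1 - a + 1) z - (a * z ^ (a - 1) * P (a + 1) z + z ^ a * P (a + 1 + 1) z))
      = -(z ^ (a - 1) * U (1 - a) z) := by
    rw [U, show (1:ℝ) - (1 - a) = a by ring]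
    have e1 : z ^ (a - 1) * z = z ^ a := by
      nth_rewrite 2 [show z = z ^ (1:ℝ) from (Real.rpow_one z).symm]
      rw [← Real.rpow_add hz, sub_add_cancel]
    have e2 : z ^ (a - 1) * z ^ (1 - a) = 1 := by
      rw [← Real.rpow_add hz, show a - 1 + (1 - a) = 0 by ring, Real.rpow_zero]
    have hrec : P a z = a * P (a + 1) z + z * P (a + 2) z := P_rec ha0 z
    rw [show a + 1 + 1 = a + 2 by ring, hrec, show (1 - a) + 1 = 1 - a + 1 by ring]
    linear_combination (Real.Gamma a * Real.Gamma (1-a) * P (a+2) z) * e1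
      - (Real.Gamma a * Real.Gamma (1-a) * P (1 - a + 1) z) * e2
  rw [harith] at h3
  exact h3

noncomputable def DD (a z : ℝ) : ℝ := Gi a z - U a z

lemma DD_zero {a : ℝ} (ha0 : 0 < a) (ha1 : a < 1) : DD a 0 = 0 := by
  rw [DD, Gi_zero ha0, U_zero ha0 ha1, sub_self]

lemma hasDerivAt_DD {a : ℝ} (ha0 : 0 < a) (ha1 : a < 1) {z : ℝ} (hz : 0 < z) :
    HasDerivAt (DD a) (-(z ^ (a - 1) * DD (1 - a) z)) z := by
  have h := (Gi_hasDerivAt a hz).sub (hasDerivAt_U ha0 ha1 hz)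
  rw [show -(z ^ (a-1) * Gi (1-a) z) - -(z ^ (a-1) * U (1-a) z)
    = -(z ^ (a-1) * DD (1-a) z) from by rw [DD]; ring] at h
  exact h

lemma continuousOn_DD {a : ℝ} (ha0 : 0 < a) (ha1 : a < 1) :
    ContinuousOn (DD a) (Ici (0:ℝ)) := by
  intro x hx
  rcases eq_or_lt_of_le (Set.mem_Ici.mp hx) with h | h
  · have hGi : ContinuousWithinAt (Gi a) (Ici (0:ℝ)) 0 := by
      rw [ContinuousWithinAt, Gi_zero ha0]
      exact Gi_tendsto_zero ha0
    have h2 := hGi.sub (continuous_U ha0 ha1).continuousWithinAt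
    rw [← h]
    exact h2
  · exact ((Gi_hasDerivAt a h).sub (hasDerivAt_U ha0 ha1 h)).continuousAt.continuousWithinAt

lemma ftc_bound {a : ℝ} (ha0 : 0 < a) (ha1 : a < 1) {M x1 : ℝ} (hM0 : 0 ≤ M)
    (hM : ∀ t ∈ Icc (0:ℝ) x1, |DD (1 - a) t| ≤ M) {x : ℝ} (hx0 : 0 ≤ x) (hx1 : x ≤ x1) :
    |DD a x| ≤ M * x ^ a / a := by
  rcases eq_or_lt_of_le hx0 with h0 | h0
  · rw [← h0, DD_zero ha0 ha1, Real.zero_rpow (ne_of_gt ha0)]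
    simp
  have ha0' : (0:ℝ) < 1 - a := by linarith
  have hsub : Icc (0:ℝ) x ⊆ Ici 0 := fun t ht => ht.1
  have hcont : ContinuousOn (DD a) (Icc 0 x) := (continuousOn_DD ha0 ha1).mono hsub
  have hderiv : ∀ t ∈ Ioo (0:ℝ) x, HasDerivWithinAt (DD a) (-(t ^ (a-1) * DD (1-a) t)) (Ioi t) t :=
    fun t ht => (hasDerivAt_DD ha0 ha1 ht.1).hasDerivWithinAt
  have hintg : IntervalIntegrable (fun t : ℝ => M * t ^ (a-1)) volume 0 x :=
    (intervalIntegral.intervalIntegrable_rpow' (by linarith : (-1:ℝ) < a - 1)).const_mul M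
  have haesm : AEStronglyMeasurable (fun t : ℝ => -(t ^ (a-1) * DD (1-a) t))
      (volume.restrict (Set.uIoc (0:ℝ) x)) := by
    rw [uIoc_of_le h0.le]
    apply ContinuousOn.aestronglyMeasurable ?_ measurableSet_Ioc
    apply ContinuousOn.neg
    apply ContinuousOn.mul
    · exact fun t ht =>
        (Real.continuousAt_rpow_const t (a-1) (Or.inl (ne_of_gt ht.1))).continuousWithinAt
    · exact (continuousOn_DD ha0' (by linarith)).mono (fun t ht => le_of_lt ht.1)
  have hbound : ∀ᵐ t ∂(volume.restrict (Set.uIoc (0:ℝ) x)),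
      ‖-(t ^ (a-1) * DD (1-a) t)‖ ≤ M * t ^ (a-1) := by
    rw [uIoc_of_le h0.le, ae_restrict_iff' measurableSet_Ioc]
    filter_upwards with t
    intro ht
    have ht0 : (0:ℝ) < t := ht.1
    rw [norm_neg, Real.norm_eq_abs, abs_mul, abs_of_nonneg (Real.rpow_nonneg ht0.le _),
      mul_comm M]
    exact mul_le_mul_of_nonneg_left (hM t ⟨ht0.le, le_trans ht.2 hx1⟩)
      (Real.rpow_nonneg ht0.le _)
  have hDint : IntervalIntegrable (fun t : ℝ => -(t ^ (a-1) * DD (1-a) t)) volume 0 x :=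
    hintg.mono_fun' haesm hbound
  have heq := intervalIntegral.integral_eq_sub_of_hasDeriv_right_of_le h0.le hcont hderiv hDint
  have hDx : DD a x = ∫ t in (0:ℝ)..x, -(t ^ (a-1) * DD (1-a) t) := by
    rw [heq, DD_zero ha0 ha1, sub_zero]
  have hval : (∫ t in (0:ℝ)..x, M * t ^ (a-1)) = M * x ^ a / a := by
    rw [intervalIntegral.integral_const_mul, integral_rpow (Or.inl (by linarith))]
    rw [show a - 1 + 1 = a by ring, Real.zero_rpow (ne_of_gt ha0), sub_zero]
    ring
  calc |DD a x| = ‖∫ t in (0:ℝ)..x, -(t ^ (a-1) * DD (1-a) t)‖ := by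
        rw [hDx, Real.norm_eq_abs]
    _ ≤ |∫ t in (0:ℝ)..x, M * t ^ (a-1)| :=
        intervalIntegral.norm_integral_le_abs_of_norm_le hbound hintg
    _ = M * x ^ a / a := by
        rw [hval, abs_of_nonneg]
        positivity

lemma DD_both_zero {a : ℝ} (ha0 : 0 < a) (ha1 : a < 1) {z : ℝ} (hz : 0 ≤ z) :
    DD a z = 0 ∧ DD (1 - a) z = 0 := by
  have ha0' : (0:ℝ) < 1 - a := by linarith
  have ha1' : 1 - a < 1 := by linarith
  have h11 : (1:ℝ) - (1 - a) = a := by ring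
  rcases eq_or_lt_of_le hz with h0 | h0
  · rw [← h0]; exact ⟨DD_zero ha0 ha1, DD_zero ha0' ha1'⟩
  set c1 : ℝ := (a/2) ^ (a⁻¹) with hc1def
  set c2 : ℝ := ((1-a)/2) ^ ((1-a)⁻¹) with hc2def
  have hc1 : 0 < c1 := Real.rpow_pos_of_pos (by linarith) _
  have hc2 : 0 < c2 := Real.rpow_pos_of_pos (by linarith) _
  set x1 : ℝ := min (min c1 c2) z with hx1def
  have hx1pos : 0 < x1 := lt_min (lt_min hc1 hc2) h0
  have hx1z : x1 ≤ z := min_le_right _ _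
  have hx1a : x1 ^ a ≤ a / 2 := by
    calc x1 ^ a ≤ c1 ^ a := Real.rpow_le_rpow hx1pos.le
          (le_trans (min_le_left _ _) (min_le_left _ _)) ha0.le
      _ = a / 2 := by
        rw [hc1def, ← Real.rpow_mul (by linarith : (0:ℝ) ≤ a/2),
          inv_mul_cancel₀ (ne_of_gt ha0), Real.rpow_one]
  have hx1b : x1 ^ (1-a) ≤ (1-a) / 2 := by
    calc x1 ^ (1-a) ≤ c2 ^ (1-a) := Real.rpow_le_rpow hx1pos.le
          (le_trans (min_le_left _ _) (min_le_right _ _)) ha0'.le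
      _ = (1-a) / 2 := by
        rw [hc2def, ← Real.rpow_mul (by linarith : (0:ℝ) ≤ (1-a)/2),
          inv_mul_cancel₀ (ne_of_gt ha0'), Real.rpow_one]
  have hsubIcc : Icc (0:ℝ) x1 ⊆ Ici 0 := fun t ht => ht.1
  have hcont : ContinuousOn (fun t => max |DD a t| |DD (1-a) t|) (Icc 0 x1) :=
    ((continuousOn_DD ha0 ha1).mono hsubIcc).abs.sup
      ((continuousOn_DD ha0' ha1').mono hsubIcc).abs
  obtain ⟨xs, hxsmem, hxsmax⟩ :=
    isCompact_Icc.exists_isMaxOn (nonempty_Icc.2 hx1pos.le) hcont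
  set M : ℝ := max |DD a xs| |DD (1-a) xs| with hMdef
  have hM0 : 0 ≤ M := le_trans (abs_nonneg _) (le_max_left _ _)
  have hMb1 : ∀ t ∈ Icc (0:ℝ) x1, |DD a t| ≤ M :=
    fun t ht => le_trans (le_max_left _ _) (hxsmax ht)
  have hMb2 : ∀ t ∈ Icc (0:ℝ) x1, |DD (1-a) t| ≤ M :=
    fun t ht => le_trans (le_max_right _ _) (hxsmax ht)
  have hD1 : ∀ t ∈ Icc (0:ℝ) x1, |DD a t| ≤ M / 2 := by
    intro t ht
    have hb := ftc_bound ha0 ha1 hM0 hMb2 ht.1 ht.2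
    have h2 : t ^ a ≤ a / 2 := le_trans (Real.rpow_le_rpow ht.1 ht.2 ha0.le) hx1a
    calc |DD a t| ≤ M * t ^ a / a := hb
      _ ≤ M * (a/2) / a := by gcongr
      _ = M / 2 := by field_simp
  have hD2 : ∀ t ∈ Icc (0:ℝ) x1, |DD (1-a) t| ≤ M / 2 := by
    intro t ht
    have hMb1' : ∀ t ∈ Icc (0:ℝ) x1, |DD (1 - (1-a)) t| ≤ M := by rw [h11]; exact hMb1
    have hb := ftc_bound ha0' ha1' hM0 hMb1' ht.1 ht.2
    have h2 : t ^ (1-a) ≤ (1-a) / 2 := le_trans (Real.rpow_le_rpow ht.1 ht.2 ha0'.le) hx1b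
    calc |DD (1-a) t| ≤ M * t ^ (1-a) / (1-a) := hb
      _ ≤ M * ((1-a)/2) / (1-a) := by gcongr
      _ = M / 2 := by field_simp
  have hMle : M ≤ M / 2 := by
    rcases max_cases |DD a xs| |DD (1-a) xs| with ⟨heq, -⟩ | ⟨heq, -⟩
    · calc M = |DD a xs| := hMdef.trans heq
        _ ≤ M / 2 := hD1 xs hxsmem
    · calc M = |DD (1-a) xs| := hMdef.trans heq
        _ ≤ M / 2 := hD2 xs hxsmem
  have hMzero : M ≤ 0 := by linarith
  have hzero1 : ∀ t ∈ Icc (0:ℝ) x1, DD a t = 0 :=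
    fun t ht => abs_nonpos_iff.mp (le_trans (hMb1 t ht) hMzero)
  have hzero2 : ∀ t ∈ Icc (0:ℝ) x1, DD (1-a) t = 0 :=
    fun t ht => abs_nonpos_iff.mp (le_trans (hMb2 t ht) hMzero)
  rcases le_or_gt z x1 with hzx | hzx
  · exact ⟨hzero1 z ⟨hz, hzx⟩, hzero2 z ⟨hz, hzx⟩⟩
  · set f : ℝ → ℝ × ℝ := fun t => (DD a t, DD (1-a) t) with hfdef
    set f' : ℝ → ℝ × ℝ := fun t => (-(t^(a-1) * DD (1-a) t), -(t^(-a) * DD a t)) with hf'def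
    set K : ℝ := max (x1 ^ (a-1)) (x1 ^ (-a)) with hKdef
    have hK0 : 0 ≤ K := le_trans (Real.rpow_nonneg hx1pos.le _) (le_max_left _ _)
    have hfc : ContinuousOn f (Icc x1 z) := by
      apply ContinuousOn.prodMk
      · exact (continuousOn_DD ha0 ha1).mono (fun t ht => le_trans hx1pos.le ht.1)
      · exact (continuousOn_DD ha0' ha1').mono (fun t ht => le_trans hx1pos.le ht.1)
    have hfd : ∀ t ∈ Ico x1 z, HasDerivWithinAt f (f' t) (Ici t) t := by
      intro t ht
      have ht0 : (0:ℝ) < t := lt_of_lt_of_le hx1pos ht.1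
      have h1 := hasDerivAt_DD ha0 ha1 ht0
      have h2 := hasDerivAt_DD ha0' ha1' ht0
      rw [h11, show (1 - a) - 1 = -a by ring] at h2
      exact (h1.prodMk h2).hasDerivWithinAt
    have hbnd : ∀ t ∈ Ico x1 z, ‖f' t‖ ≤ K * ‖f t‖ + 0 := by
      intro t ht
      have ht0 : (0:ℝ) < t := lt_of_lt_of_le hx1pos ht.1
      rw [add_zero, hf'def, Prod.norm_def]
      have hft : ‖f t‖ = max |DD a t| |DD (1-a) t| := by
        rw [hfdef, Prod.norm_def, Real.norm_eq_abs, Real.norm_eq_abs]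
      rw [hft]
      apply max_le
      · rw [Real.norm_eq_abs, abs_neg, abs_mul, abs_of_nonneg (Real.rpow_nonneg ht0.le _)]
        apply mul_le_mul
        · exact le_trans (Real.rpow_le_rpow_of_nonpos hx1pos ht.1 (by linarith))
            (le_max_left _ _)
        · exact le_max_right _ _
        · exact abs_nonneg _
        · exact hK0
      · rw [Real.norm_eq_abs, abs_neg, abs_mul, abs_of_nonneg (Real.rpow_nonneg ht0.le _)]
        apply mul_le_mul
        · exact le_trans (Real.rpow_le_rpow_of_nonpos hx1pos ht.1 (by linarith))
            (le_max_right _ _)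
        · exact le_max_left _ _
        · exact abs_nonneg _
        · exact hK0
    have hf0 : ‖f x1‖ ≤ 0 := by
      rw [hfdef]
      simp only [Prod.norm_def]
      rw [hzero1 x1 ⟨hx1pos.le, le_refl x1⟩, hzero2 x1 ⟨hx1pos.le, le_refl x1⟩]
      simp
    have hgron := norm_le_gronwallBound_of_norm_deriv_right_le hfc hfd hf0 hbnd z
      ⟨hzx.le, le_refl z⟩
    rw [gronwallBound_ε0, zero_mul] at hgron
    have hfz : ‖f z‖ ≤ 0 := hgron
    constructor
    · have : |DD a z| ≤ ‖f z‖ := by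
        rw [hfdef, Prod.norm_def, Real.norm_eq_abs]; exact le_max_left _ _
      exact abs_nonpos_iff.mp (le_trans this hfz)
    · have : |DD (1-a) z| ≤ ‖f z‖ := by
        rw [hfdef, Prod.norm_def, Real.norm_eq_abs]
        exact le_trans (le_of_eq rfl) (le_max_right _ _)
      exact abs_nonpos_iff.mp (le_trans this hfz)

lemma Gi_eq_U {a : ℝ} (ha0 : 0 < a) (ha1 : a < 1) {z : ℝ} (hz : 0 ≤ z) :
    Gi a z = U a z := by
  have h := (DD_both_zero ha0 ha1 hz).1
  rw [DD] at h
  linarith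

lemma P_shifted {a : ℝ} (ha : 0 < a) (z : ℝ) :
    P a z = 1 / Real.Gamma a
      + ∑' m : ℕ, z ^ (m+1) / ((m+1).factorial * Real.Gamma (((m+1 : ℕ) : ℝ) + a)) := by
  rw [P, (summable_P ha z).tsum_eq_zero_add]
  congr 1
  simp

lemma theta_formula {k : ℝ} (hk0 : 0 < k) (hk1 : k < 1) {u : ℝ} (hu : 0 ≤ u) :
    theta k u = 1 - Gi ((1-k)/2) ((u/2)^2) / Real.Gamma ((1-k)/2) := by
  set ν : ℝ := (1-k)/2 with hν
  have hν0 : 0 < ν := by rw [hν]; linarith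
  have hν1 : ν < 1 := by rw [hν]; linarith
  have hG1ν : 0 < Real.Gamma (1-ν) := Real.Gamma_pos_of_pos (by linarith)
  have hGν : 0 < Real.Gamma ν := Real.Gamma_pos_of_pos hν0
  have hGν1 : 0 < Real.Gamma (ν+1) := Real.Gamma_pos_of_pos (by linarith)
  rcases eq_or_lt_of_le hu with h0 | h0
  · -- u = 0
    rw [← h0]
    have hz : ((0:ℝ)/2)^2 = 0 := by norm_num
    rw [hz, Gi_zero hν0, div_self (ne_of_gt hGν), theta]
    have e1 : (0:ℝ) ^ (1-k) = 0 := Real.zero_rpow (ne_of_gt (by linarith : (0:ℝ) < 1-k))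
    have e2 : ∀ m : ℕ, ((0:ℝ)/2) ^ (2*((m:ℝ)+1) - k + 1) /
        ((Nat.factorial (m+1)) * Real.Gamma (((m:ℝ)+1) + (3-k)/2)) = 0 := by
      intro m
      have hm : (0:ℝ) ≤ (m:ℝ) := Nat.cast_nonneg m
      rw [zero_div, Real.zero_rpow (ne_of_gt (by nlinarith : (0:ℝ) < 2*((m:ℝ)+1) - k + 1)),
        zero_div]
    have e3 : ∀ m : ℕ, ((0:ℝ)/2) ^ (2*((m:ℝ)+1)) /
        ((Nat.factorial (m+1)) * Real.Gamma (((m:ℝ)+1) + (k+1)/2)) = 0 := by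
      intro m
      have hm : (0:ℝ) ≤ (m:ℝ) := Nat.cast_nonneg m
      rw [zero_div, Real.zero_rpow (ne_of_gt (by nlinarith : (0:ℝ) < 2*((m:ℝ)+1))),
        zero_div]
    rw [e1]
    rw [tsum_congr e2, tsum_congr e3, tsum_zero]
    ring
  · -- u > 0
    set w : ℝ := u/2 with hwdef
    have hw0 : 0 < w := by rw [hwdef]; linarith
    set z : ℝ := w^2 with hzdef
    have hz0 : 0 < z := by rw [hzdef]; positivity
    -- S2
    have hS2 : (∑' m : ℕ, (u/2) ^ (2*((m:ℝ)+1)) /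
        ((Nat.factorial (m+1)) * Real.Gamma (((m:ℝ)+1) + (k+1)/2)))
        = P (1-ν) z - 1 / Real.Gamma (1-ν) := by
      have hcong : ∀ m : ℕ, (u/2) ^ (2*((m:ℝ)+1)) /
          ((Nat.factorial (m+1)) * Real.Gamma (((m:ℝ)+1) + (k+1)/2))
          = z ^ (m+1) / ((m+1).factorial * Real.Gamma (((m+1 : ℕ) : ℝ) + (1-ν))) := by
        intro m
        rw [← hwdef]
        congr 1
        · rw [show (2:ℝ)*((m:ℝ)+1) = ((2*(m+1) : ℕ) : ℝ) by push_cast; ring,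
            Real.rpow_natCast, pow_mul, hzdef]
        · congr 1
          rw [hν]; push_cast; ring
      rw [tsum_congr hcong, P_shifted (by linarith : (0:ℝ) < 1-ν) z]
      ring
    -- S1
    have hS1 : (∑' m : ℕ, (u/2) ^ (2*((m:ℝ)+1) - k + 1) /
        ((Nat.factorial (m+1)) * Real.Gamma (((m:ℝ)+1) + (3-k)/2)))
        = z ^ ν * (P (ν+1) z - 1 / Real.Gamma (ν+1)) := by
      have hcong : ∀ m : ℕ, (u/2) ^ (2*((m:ℝ)+1) - k + 1) /
          ((Nat.factorial (m+1)) * Real.Gamma (((m:ℝ)+1) + (3-k)/2))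
          = z ^ ν * (z ^ (m+1) / ((m+1).factorial * Real.Gamma (((m+1 : ℕ) : ℝ) + (ν+1)))) := by
        intro m
        rw [← hwdef]
        have hnum : w ^ (2*((m:ℝ)+1) - k + 1) = z ^ ν * z ^ (m+1) := by
          have h1 : 2*((m:ℝ)+1) - k + 1 = 2*ν + 2*((m:ℝ)+1) := by rw [hν]; ring
          rw [h1, Real.rpow_add hw0]
          congr 1
          · rw [hzdef, ← Real.rpow_natCast w 2, ← Real.rpow_mul hw0.le]
            norm_num
          · rw [show (2:ℝ)*((m:ℝ)+1) = ((2*(m+1) : ℕ) : ℝ) by push_cast; ring,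
              Real.rpow_natCast, pow_mul, hzdef]
        rw [hnum, mul_div_assoc]
        congr 2
        rw [hν]; push_cast; ring
      rw [tsum_congr hcong, tsum_mul_left, P_shifted (by linarith : (0:ℝ) < ν+1) z]
      ring
    -- A0
    have hA0 : (2:ℝ)^(k-1) * u^(1-k) / Real.Gamma ((3-k)/2) = z ^ ν / Real.Gamma (ν+1) := by
      have hu2 : u = 2*w := by rw [hwdef]; ring
      have h1 : u ^ (1-k) = 2 ^ (1-k) * w ^ (1-k) := by
        rw [hu2, Real.mul_rpow (by norm_num) hw0.le]
      have h2 : w ^ (1-k) = z ^ ν := by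
        rw [hzdef, ← Real.rpow_natCast w 2, ← Real.rpow_mul hw0.le]
        congr 1
        rw [hν]; push_cast; ring
      have h3 : (2:ℝ)^(k-1) * (2:ℝ)^(1-k) = 1 := by
        rw [← Real.rpow_add (by norm_num : (0:ℝ) < 2), show k-1+(1-k) = 0 by ring,
          Real.rpow_zero]
      have h4 : Real.Gamma ((3-k)/2) = Real.Gamma (ν+1) := by
        congr 1; rw [hν]; ring
      rw [h1, h4, ← mul_assoc, h3, one_mul, h2]
    have hkey : Gi ν z = Real.Gamma ν * Real.Gamma (1-ν) *
        (P (1-ν) z - z ^ ν * P (ν+1) z) := Gi_eq_U hν0 hν1 hz0.le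
    have hGk : Real.Gamma ((k+1)/2) = Real.Gamma (1-ν) := by
      congr 1; rw [hν]; ring
    rw [theta, hGk, hA0, hS1, hS2, hkey]
    field_simp [hGν.ne', hG1ν.ne', hGν1.ne']
    ring

end Lemma1Aux

theorem lemma1_theta_bounded (k : ℝ) (hk0 : 0 < k) (hk1 : k < 1) :
    ∃ M : ℝ, 0 < M ∧ ∀ u : ℝ, 0 ≤ u → |theta k u| ≤ M := by
  refine ⟨1, one_pos, fun u hu => ?_⟩
  rw [Lemma1Aux.theta_formula hk0 hk1 hu]
  set ν : ℝ := (1-k)/2 with hν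
  have hν0 : 0 < ν := by rw [hν]; linarith
  have hGν : 0 < Real.Gamma ν := Real.Gamma_pos_of_pos hν0
  have h1 : 0 ≤ Lemma1Aux.Gi ν ((u/2)^2) := Lemma1Aux.Gi_nonneg
  have h2 : Lemma1Aux.Gi ν ((u/2)^2) ≤ Real.Gamma ν :=
    Lemma1Aux.Gi_le_Gamma hν0 (by positivity)
  rw [abs_le]
  constructor
  · have h3 : Lemma1Aux.Gi ν ((u/2)^2) / Real.Gamma ν ≤ 1 := (div_le_one hGν).2 h2
    linarith
  · have h3 : 0 ≤ Lemma1Aux.Gi ν ((u/2)^2) / Real.Gamma ν := div_nonneg h1 hGν.le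
    linarith
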